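/- Let A be an integral domain, ⋆ a star operation of finite type on A, a a nonzero element of A, and ℱ a collection of ideals of A each containing a. Define 𝔞 := {x ∈ A : x·∏ℱ' ⊆ aA for some finite subcollection ℱ' ⊆ ℱ}. If 𝔞 is ⋆-finite, then there exists a finite subcollection Ĝ of ℱ such that 𝔞 = {x ∈ A : x·∏Ĝ ⊆ aA}. -/

import Mathlib

open scoped nonZeroDivisors

/-- A star operation on an integral domain `A` with quotient field `K`: a map on
(nonzero) fractional ideals satisfying `A^⋆ = A`, `(xI)^⋆ = x·I^⋆`, `I ⊆ I^⋆`,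
monotonicity and idempotency. -/
structure StarOperation (A : Type*) [CommRing A] [IsDomain A]
    (K : Type*) [Field K] [Algebra A K] [IsFractionRing A K] where
  star : FractionalIdeal A⁰ K → FractionalIdeal A⁰ K
  star_one : star 1 = 1
  star_smul : ∀ (x : K), x ≠ 0 → ∀ I : FractionalIdeal A⁰ K, I ≠ 0 →
    star (FractionalIdeal.spanSingleton A⁰ x * I) = FractionalIdeal.spanSingleton A⁰ x * star I
  le_star : ∀ I : FractionalIdeal A⁰ K, I ≠ 0 → I ≤ star I
  mono : ∀ I J : FractionalIdeal A⁰ K, I ≠ 0 → I ≤ J → star I ≤ star J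
  star_idem : ∀ I : FractionalIdeal A⁰ K, I ≠ 0 → star (star I) = star I

variable {A : Type*} [CommRing A] [IsDomain A]
  {K : Type*} [Field K] [Algebra A K] [IsFractionRing A K]

/-- `⋆` is of finite type: `I^⋆` is the union of the `J^⋆` over the finitely
generated (nonzero) fractional ideals `J ⊆ I`. -/
def StarOperation.IsFiniteType (s : StarOperation A K) : Prop :=
  ∀ I : FractionalIdeal A⁰ K, I ≠ 0 → ∀ x : K, x ∈ s.star I →
    ∃ J : FractionalIdeal A⁰ K, J ≠ 0 ∧ J ≤ I ∧ (J : Submodule A K).FG ∧ x ∈ s.star J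

/-- A (nonzero, integral) ideal `I` is a `⋆`-ideal if `I^⋆ = I`. -/
def IsStarIdeal (s : StarOperation A K) (I : Ideal A) : Prop :=
  I ≠ 0 ∧ s.star ↑I = (I : FractionalIdeal A⁰ K)

/-- A (nonzero, integral) ideal `I` is `⋆`-finite if `J^⋆ = I^⋆` for some finitely
generated (nonzero) ideal `J`. -/
def IsStarFinite (s : StarOperation A K) (I : Ideal A) : Prop :=
  I ≠ 0 ∧ ∃ J : Ideal A, J ≠ 0 ∧ J.FG ∧ s.star ↑J = s.star (I : FractionalIdeal A⁰ K)

/-- An ideal of `A` is `⋆`-maximal if it is maximal among proper `⋆`-ideals. -/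
def IsStarMaximal (s : StarOperation A K) (M : Ideal A) : Prop :=
  M ≠ ⊤ ∧ IsStarIdeal s M ∧ ∀ J : Ideal A, J ≠ ⊤ → IsStarIdeal s J → M ≤ J → J = M

/-- Property (⋆-c.a.): for every pair of proper ⋆-finite ⋆-ideals `𝔞₁, 𝔞₂` containing
`𝔞`, the ideal `(𝔞₁ + 𝔞₂)^⋆` is proper. -/
def StarCA (s : StarOperation A K) (𝔞 : Ideal A) : Prop :=
  ∀ 𝔞₁ 𝔞₂ : Ideal A, 𝔞 ≤ 𝔞₁ → 𝔞 ≤ 𝔞₂ →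
    𝔞₁ ≠ ⊤ → IsStarIdeal s 𝔞₁ → IsStarFinite s 𝔞₁ →
    𝔞₂ ≠ ⊤ → IsStarIdeal s 𝔞₂ → IsStarFinite s 𝔞₂ →
    s.star ↑(𝔞₁ + 𝔞₂) ≠ 1

/-- `ℱ` is a ⋆-comaximal collection over `a`: `a` lies in every member and
`(𝔞₁ + 𝔞₂)^⋆ = A` for all distinct members. -/
def IsStarComaximalOver (s : StarOperation A K) (a : A) (F : Set (Ideal A)) : Prop :=
  (∀ I ∈ F, a ∈ I) ∧ ∀ I ∈ F, ∀ J ∈ F, I ≠ J → s.star ↑(I + J) = 1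

/-- `(Σ')^⋆_a`: the ⋆-comaximal collections over `a` of proper ⋆-finite ⋆-ideals. -/
def SigmaP (s : StarOperation A K) (a : A) : Set (Set (Ideal A)) :=
  {F | IsStarComaximalOver s a F ∧ ∀ I ∈ F, I ≠ ⊤ ∧ IsStarIdeal s I ∧ IsStarFinite s I}

/-- `Σ^⋆_a`: members of `(Σ')^⋆_a` all of whose ideals satisfy (⋆-c.a.). -/
def SigmaCA (s : StarOperation A K) (a : A) : Set (Set (Ideal A)) :=
  {F | F ∈ SigmaP s a ∧ ∀ I ∈ F, StarCA s I}

/-- The set `𝔞 = {x ∈ A : x·∏ℱ' ⊆ aA for some finite subcollection ℱ' ⊆ ℱ}`. -/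
def prodSet {A : Type*} [CommRing A] (F : Set (Ideal A)) (a : A) : Set A :=
  {x : A | ∃ G : Finset (Ideal A), ↑G ⊆ F ∧
    Ideal.span {x} * (G.prod id) ≤ Ideal.span {a}}

/-- Let `⋆` be a finite type star operation on `A`, `a ≠ 0`, `ℱ` a collection of ideals
of `A` each containing `a`, and `𝔞` the ideal
`{x : x·∏ℱ' ⊆ aA for some finite ℱ' ⊆ ℱ}`. If `𝔞` is ⋆-finite, then there is a finite
subcollection `Ghat ⊆ ℱ` with `𝔞 = {x : x·∏Ghat ⊆ aA}`. -/

private lemma starHelper_mul_mem (s : StarOperation A K) (S : Ideal A) (hS : S ≠ 0)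
    (a t : A) (ha : a ≠ 0) (h : ∀ y ∈ S, t * y ∈ Ideal.span {a})
    (x : A) (hx : algebraMap A K x ∈ s.star ↑S) : x * t ∈ Ideal.span {a} := by
  by_cases ht : t = 0
  · simp [ht]
  have hinj : Function.Injective (algebraMap A K) := IsFractionRing.injective A K
  have haK : algebraMap A K a ≠ 0 := fun hc => ha (hinj (by simpa using hc))
  have htK : algebraMap A K t ≠ 0 := fun hc => ht (hinj (by simpa using hc))
  set z : K := algebraMap A K t / algebraMap A K a with hzdef
  have hzne : z ≠ 0 := div_ne_zero htK haK
  have hSne : (S : FractionalIdeal A⁰ K) ≠ 0 := by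
    rwa [Ne, FractionalIdeal.coeIdeal_eq_zero, ← Ne]
  have hle : FractionalIdeal.spanSingleton A⁰ z * (S : FractionalIdeal A⁰ K) ≤ 1 := by
    rw [FractionalIdeal.mul_le]
    intro i hi j hj
    obtain ⟨c, rfl⟩ := (FractionalIdeal.mem_spanSingleton A⁰).1 hi
    obtain ⟨y, hy, rfl⟩ := (FractionalIdeal.mem_coeIdeal A⁰).1 hj
    obtain ⟨c', hc'⟩ := Ideal.mem_span_singleton.1 (h y hy)
    have : z * algebraMap A K y = algebraMap A K c' := by
      rw [hzdef, div_mul_eq_mul_div, ← map_mul, hc', map_mul]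
      field_simp
    refine (FractionalIdeal.mem_one_iff A⁰).2 ⟨c * c', ?_⟩
    rw [map_mul, ← this, Algebra.smul_def]
    ring
  have hne : FractionalIdeal.spanSingleton A⁰ z * (S : FractionalIdeal A⁰ K) ≠ 0 := by
    obtain ⟨y, hy, hyne⟩ := Submodule.exists_mem_ne_zero_of_ne_bot hS
    intro hc
    have hymem : algebraMap A K y ∈ (S : FractionalIdeal A⁰ K) :=
      (FractionalIdeal.mem_coeIdeal A⁰).2 ⟨y, hy, rfl⟩
    have : z * algebraMap A K y ∈ FractionalIdeal.spanSingleton A⁰ z * (S : FractionalIdeal A⁰ K) :=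
      FractionalIdeal.mul_mem_mul (FractionalIdeal.mem_spanSingleton_self A⁰ z) hymem
    rw [hc] at this
    have hzero : z * algebraMap A K y = 0 := by simpa using this
    exact (mul_ne_zero hzne (fun h => hyne ((IsFractionRing.injective A K) (by simpa using h)))) hzero
  have hstar : FractionalIdeal.spanSingleton A⁰ z * s.star ↑S ≤ 1 := by
    rw [← s.star_smul z hzne _ hSne]
    calc s.star (FractionalIdeal.spanSingleton A⁰ z * ↑S)
        ≤ s.star 1 := s.mono _ _ hne (le_trans hle (le_of_eq rfl))
      _ = 1 := s.star_one
  have hmem : z * algebraMap A K x ∈ (1 : FractionalIdeal A⁰ K) :=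
    hstar (FractionalIdeal.mul_mem_mul (FractionalIdeal.mem_spanSingleton_self A⁰ z) hx)
  obtain ⟨c, hc⟩ := (FractionalIdeal.mem_one_iff A⁰).1 hmem
  have : algebraMap A K (a * c) = algebraMap A K (x * t) := by
    rw [map_mul, map_mul, hc, hzdef]
    field_simp
  rw [Ideal.mem_span_singleton]
  exact ⟨c, (hinj this).symm⟩

theorem prodSet_eq_of_starFinite
    (s : StarOperation A K) (hs : s.IsFiniteType) (a : A) (ha : a ≠ 0)
    (F : Set (Ideal A)) (hF : ∀ I ∈ F, a ∈ I)
    (𝔞 : Ideal A) (h𝔞 : (𝔞 : Set A) = prodSet F a) (hfin : IsStarFinite s 𝔞) :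
    ∃ G : Finset (Ideal A), ↑G ⊆ F ∧
      (𝔞 : Set A) = {x : A | Ideal.span {x} * (G.prod id) ≤ Ideal.span {a}} := by
  classical
  obtain ⟨h𝔞ne, J₀, hJ₀ne, hJ₀fg, hJ₀star⟩ := hfin
  have h𝔞K : (𝔞 : FractionalIdeal A⁰ K) ≠ 0 := by
    rwa [Ne, FractionalIdeal.coeIdeal_eq_zero, ← Ne]
  have hJ₀K : (J₀ : FractionalIdeal A⁰ K) ≠ 0 := by
    rwa [Ne, FractionalIdeal.coeIdeal_eq_zero, ← Ne]
  obtain ⟨s₀, hs₀⟩ := hJ₀fg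
  -- For each generator of J₀, find a f.g. nonzero ideal inside 𝔞 whose star contains it
  have key : ∀ x ∈ s₀, ∃ I : Ideal A, I ≠ 0 ∧ I ≤ 𝔞 ∧ I.FG ∧
      algebraMap A K x ∈ s.star ↑I := by
    intro x hx
    have hxJ₀ : algebraMap A K x ∈ (J₀ : FractionalIdeal A⁰ K) :=
      (FractionalIdeal.mem_coeIdeal A⁰).2 ⟨x, by rw [← hs₀]; exact Ideal.subset_span hx, rfl⟩
    have hxstar : algebraMap A K x ∈ s.star (𝔞 : FractionalIdeal A⁰ K) := by
      rw [← hJ₀star]; exact s.le_star _ hJ₀K hxJ₀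
    obtain ⟨J', hJ'ne, hJ'le, hJ'fg, hxJ'⟩ := hs _ h𝔞K _ hxstar
    obtain ⟨I, rfl⟩ := FractionalIdeal.le_one_iff_exists_coeIdeal.1
      (le_trans hJ'le FractionalIdeal.coeIdeal_le_one)
    refine ⟨I, ?_, ?_, ?_, hxJ'⟩
    · intro hc; apply hJ'ne; rw [hc]; simp
    · exact (FractionalIdeal.coeIdeal_le_coeIdeal K).1 hJ'le
    · have := hJ'fg
      rw [FractionalIdeal.coe_coeIdeal] at this
      exact Submodule.fg_of_fg_map_injective (Algebra.linearMap A K)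
        (IsFractionRing.injective A K) this
  choose I hIne hIle hIfg hIstar using key
  have hs₀ne : s₀.Nonempty := by
    rcases Finset.eq_empty_or_nonempty s₀ with h | h
    · exfalso; apply hJ₀ne; rw [← hs₀, h]; simp
    · exact h
  set S : Ideal A := s₀.attach.sup (fun x => I x.1 x.2) with hSdef
  obtain ⟨x₀, hx₀⟩ := hs₀ne
  have hSne : S ≠ 0 := by
    intro hc
    apply hIne x₀ hx₀
    have : I x₀ hx₀ ≤ S := by
      rw [hSdef]
      exact Finset.le_sup (f := fun x : {x // x ∈ s₀} => I x.1 x.2) (Finset.mem_attach _ ⟨x₀, hx₀⟩)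
    rw [hc] at this
    exact le_bot_iff.1 this
  have hSle : S ≤ 𝔞 := Finset.sup_le fun x _ => hIle x.1 x.2
  have hSfg : S.FG := Submodule.fg_finset_sup _ _ fun x _ => hIfg x.1 x.2
  have hSK : (S : FractionalIdeal A⁰ K) ≠ 0 := by
    rwa [Ne, FractionalIdeal.coeIdeal_eq_zero, ← Ne]
  -- ↑𝔞 ≤ star ↑S
  have hJ₀leS : (J₀ : FractionalIdeal A⁰ K) ≤ s.star ↑S := by
    intro k hk
    obtain ⟨y, hy, rfl⟩ := (FractionalIdeal.mem_coeIdeal A⁰).1 hk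
    have hy' : y ∈ Ideal.span (s₀ : Set A) := by rw [hs₀]; exact hy
    set M : Ideal A := Submodule.comap (Algebra.linearMap A K)
      ((s.star ↑S : FractionalIdeal A⁰ K) : Submodule A K) with hMdef
    have hsub : (s₀ : Set A) ⊆ M := by
      intro x hx
      rw [Finset.mem_coe] at hx
      have h1 : I x hx ≤ S := by
        rw [hSdef]
        exact Finset.le_sup (f := fun x : {x // x ∈ s₀} => I x.1 x.2) (Finset.mem_attach _ ⟨x, hx⟩)
      have h2 : s.star ↑(I x hx) ≤ s.star ↑S := by
        have hne : (I x hx : FractionalIdeal A⁰ K) ≠ 0 := fun hc =>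
          hIne x hx (by simpa using FractionalIdeal.coeIdeal_eq_zero.1 hc)
        exact s.mono _ _ hne ((FractionalIdeal.coeIdeal_le_coeIdeal K).2 h1)
      exact h2 (hIstar x hx)
    have : y ∈ M := Ideal.span_le.2 hsub hy'
    exact this
  have hmain : (𝔞 : FractionalIdeal A⁰ K) ≤ s.star ↑S := by
    calc (𝔞 : FractionalIdeal A⁰ K) ≤ s.star ↑𝔞 := s.le_star _ h𝔞K
      _ = s.star ↑J₀ := hJ₀star.symm
      _ ≤ s.star (s.star ↑S) := s.mono _ _ hJ₀K hJ₀leS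
      _ = s.star ↑S := s.star_idem _ hSK
  -- generators of S, each in 𝔞 = prodSet
  obtain ⟨T, hT⟩ := hSfg
  have hTmem : ∀ g ∈ T, (g : A) ∈ prodSet F a := by
    intro g hg
    rw [← h𝔞]
    exact hSle (hT ▸ Ideal.subset_span hg)
  choose G hGF hGle using fun g hg => hTmem g hg
  set Ghat : Finset (Ideal A) := T.attach.biUnion (fun g => G g.1 g.2) with hGhatdef
  refine ⟨Ghat, ?_, ?_⟩
  · intro i hi
    simp only [hGhatdef, Finset.coe_biUnion, Set.mem_iUnion, Finset.mem_coe] at hi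
    obtain ⟨g, _, hgi⟩ := hi
    exact hGF g.1 g.2 hgi
  · -- key containment: S * ∏Ghat ≤ span {a}
    have hprodsub : ∀ g (hg : g ∈ T), (Ghat.prod id : Ideal A) ≤ ((G g hg).prod id) := by
      intro g hg
      have hsub : G g hg ⊆ Ghat := by
        intro i hi
        exact Finset.mem_biUnion.2 ⟨⟨g, hg⟩, Finset.mem_attach _ _, hi⟩
      have := Finset.prod_sdiff (f := id) hsub
      calc Ghat.prod id = ((Ghat \ G g hg).prod id) * ((G g hg).prod id) := this.symm
        _ ≤ (G g hg).prod id := Ideal.mul_le_right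
    have hSprod : ∀ y ∈ S, ∀ t ∈ Ghat.prod id, t * y ∈ Ideal.span {a} := by
      intro y hy t ht
      rw [← hT] at hy
      induction hy using Submodule.span_induction with
      | mem g hg =>
        have h1 : Ideal.span {g} * ((G g hg).prod id) ≤ Ideal.span {a} := hGle g hg
        have : t * g ∈ Ideal.span {g} * ((G g hg).prod id) :=
          mul_comm t g ▸ Ideal.mul_mem_mul (Ideal.subset_span rfl) (hprodsub g hg ht)
        exact h1 this
      | zero => simp
      | add u v _ _ hu hv => rw [mul_add]; exact Ideal.add_mem _ hu hv
      | smul c u _ hu =>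
        rw [smul_eq_mul, mul_comm c u, ← mul_assoc]
        exact Ideal.mul_mem_right c _ hu
    ext x
    constructor
    · intro hx
      have hxK : algebraMap A K x ∈ s.star ↑S :=
        hmain ((FractionalIdeal.mem_coeIdeal A⁰).2 ⟨x, hx, rfl⟩)
      show Ideal.span {x} * Ghat.prod id ≤ Ideal.span {a}
      rw [Ideal.mul_le]
      intro r hr t ht
      obtain ⟨c, rfl⟩ := Ideal.mem_span_singleton'.1 hr
      have hxt : x * t ∈ Ideal.span {a} :=
        starHelper_mul_mem s S hSne a t ha (fun y hy => hSprod y hy t ht) x hxK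
      have : c * x * t = c * (x * t) := by ring
      rw [this]
      exact Ideal.mul_mem_left _ c hxt
    · intro hx
      have : x ∈ prodSet F a := by
        refine ⟨Ghat, ?_, hx⟩
        intro i hi
        simp only [hGhatdef, Finset.coe_biUnion, Set.mem_iUnion, Finset.mem_coe] at hi
        obtain ⟨g, _, hgi⟩ := hi
        exact hGF g.1 g.2 hgi
      rw [h𝔞]; exact this
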